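/- Let ρ₁, ρ₂ : Matrix (Fin n) (Fin n) ℂ be density matrices (positive semidefinite with trace 1). Then λ(ρ₁) is majorized by λ(ρ₂) (for every k ≤ n the sum of the k largest eigenvalues of ρ₁ is at most that of ρ₂, with equal totals) if and only if there exist m : ℕ and matrices A₁, …, A_m : Matrix (Fin n) (Fin n) ℂ with ∑ᵢ Aᵢᴴ·Aᵢ = 1 and ∑ᵢ Aᵢ·Aᵢᴴ = 1 such that ρ₁ = ∑ᵢ Aᵢ·ρ₂·Aᵢᴴ. -/

import Mathlib

open Matrix ComplexOrder Finset

open Matrix ComplexOrder Finset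

variable {n : ℕ}

private def S (f : Fin n → ℝ) (k : ℕ) : ℝ :=
  ∑ i ∈ Finset.univ.filter (fun i : Fin n => (i : ℕ) < k), f i

private lemma filter_succ_eq {k : ℕ} (hk : k < n) :
    Finset.univ.filter (fun i : Fin n => (i : ℕ) < k + 1)
      = insert ⟨k, hk⟩ (Finset.univ.filter (fun i : Fin n => (i : ℕ) < k)) := by
  ext i
  simp only [mem_filter, mem_univ, true_and, mem_insert, Fin.ext_iff]
  omega

private lemma S_succ (f : Fin n → ℝ) {k : ℕ} (hk : k < n) :
    S f (k + 1) = S f k + f ⟨k, hk⟩ := by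
  rw [S, S, filter_succ_eq hk, Finset.sum_insert (by simp)]
  ring

private lemma permMatrix_mulVec (σ : Equiv.Perm (Fin n)) (v : Fin n → ℝ) (i : Fin n) :
    (σ.permMatrix ℝ *ᵥ v) i = v (σ i) := by
  simp [mulVec, dotProduct, Equiv.Perm.permMatrix, PEquiv.toMatrix_apply, Equiv.toPEquiv_apply,
    Finset.sum_ite_eq, Finset.sum_ite_eq']

private lemma hlp (x : Fin n → ℝ) (hx : Antitone x) :
    ∀ d : ℕ, ∀ y : Fin n → ℝ,
      (Finset.univ.filter (fun t => x t ≠ y t)).card ≤ d →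
      (∀ k : ℕ, S x k ≤ S y k) → (∑ t, x t = ∑ t, y t) →
      ∃ M ∈ doublyStochastic ℝ (Fin n), M *ᵥ y = x := by
  intro d
  induction d with
  | zero =>
    intro y hcard _ _
    have hxy : ∀ t, x t = y t := by
      intro t
      by_contra h
      have : t ∈ Finset.univ.filter (fun t => x t ≠ y t) := by simp [h]
      have := Finset.card_pos.mpr ⟨t, this⟩
      omega
    exact ⟨1, one_mem _, by funext i; rw [one_mulVec]; exact (hxy i).symm⟩
  | succ d ih =>
    intro y hcard hmaj htot
    by_cases hxy : ∀ t, x t = y t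
    · exact ⟨1, one_mem _, by funext i; rw [one_mulVec]; exact (hxy i).symm⟩
    -- find pivots
    have hJ : (Finset.univ.filter (fun t => y t < x t)).Nonempty := by
      rw [Finset.filter_nonempty_iff]
      by_contra h
      push_neg at h
      have hle : ∀ t ∈ Finset.univ, x t ≤ y t := fun t ht => h t ht
      have := (Finset.sum_eq_sum_iff_of_le hle).mp htot
      exact hxy fun t => this t (Finset.mem_univ t)
    set j := (Finset.univ.filter (fun t => y t < x t)).min' hJ with hjdef
    have hj : y j < x j := by
      have := Finset.min'_mem _ hJ
      simp only [Finset.mem_filter] at this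
      exact this.2
    have hjmin : ∀ t, y t < x t → j ≤ t := fun t ht =>
      Finset.min'_le _ _ (by simp [ht])
    have hIex : (Finset.univ.filter (fun t => t < j ∧ x t < y t)).Nonempty := by
      rw [Finset.filter_nonempty_iff]
      by_contra h
      push_neg at h
      have heq : ∀ t, t < j → x t = y t := by
        intro t htj
        have h1 : y t ≤ x t := h t (Finset.mem_univ t) htj
        have h2 : ¬ y t < x t := fun hyt => absurd htj (not_lt.mpr (hjmin t hyt))
        linarith [not_lt.mp h2]
      have hSeq : S x (j : ℕ) = S y (j : ℕ) := by
        refine Finset.sum_congr rfl fun t ht => ?_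
        simp only [Finset.mem_filter] at ht
        exact heq t (by exact_mod_cast ht.2)
      have h1 := hmaj ((j : ℕ) + 1)
      rw [S_succ x j.2, S_succ y j.2, hSeq] at h1
      simp only [Fin.eta] at h1
      linarith
    set i := (Finset.univ.filter (fun t => t < j ∧ x t < y t)).max' hIex with hidef
    have hi : i < j ∧ x i < y i := by
      have := Finset.max'_mem _ hIex
      simp only [Finset.mem_filter] at this
      exact this.2
    have himax : ∀ t, t < j → x t < y t → t ≤ i := fun t h1 h2 =>
      Finset.le_max' _ _ (by simp [h1, h2])
    have hbetween : ∀ t, i < t → t < j → x t = y t := by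
      intro t hit htj
      have h2 : ¬ y t < x t := fun hyt => absurd htj (not_lt.mpr (hjmin t hyt))
      have h1 : ¬ x t < y t := fun hxt => absurd hit (not_lt.mpr (himax t htj hxt))
      linarith [not_lt.mp h1, not_lt.mp h2]
    have hij : i ≠ j := ne_of_lt hi.1
    have hxixj : x j ≤ x i := hx (le_of_lt hi.1)
    set δ := min (y i - x i) (x j - y j) with hδdef
    have hδ : 0 < δ := lt_min (by linarith [hi.2]) (by linarith)
    have hδ1 : δ ≤ y i - x i := min_le_left _ _
    have hδ2 : δ ≤ x j - y j := min_le_right _ _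
    have hyiyj : 0 < y i - y j := by linarith [hi.2]
    have hδle : δ ≤ y i - y j := by linarith
    set y' := Function.update (Function.update y i (y i - δ)) j (y j + δ) with hy'def
    have hy'j : y' j = y j + δ := by simp [hy'def]
    have hy'i : y' i = y i - δ := by
      rw [hy'def, Function.update_of_ne hij, Function.update_self]
    have hy'o : ∀ t, t ≠ i → t ≠ j → y' t = y t := by
      intro t h1 h2
      rw [hy'def, Function.update_of_ne h2, Function.update_of_ne h1]
    -- the T-transform matrix
    set tc := δ / (y i - y j) with htcdef
    have htc0 : 0 ≤ tc := le_of_lt (div_pos hδ hyiyj)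
    have htc1 : tc ≤ 1 := (div_le_one hyiyj).mpr hδle
    have htcδ : tc * (y i - y j) = δ := div_mul_cancel₀ _ (ne_of_gt hyiyj)
    set T := (1 - tc) • (1 : Matrix (Fin n) (Fin n) ℝ)
        + tc • ((Equiv.swap i j).permMatrix ℝ) with hTdef
    have hT : T ∈ doublyStochastic ℝ (Fin n) := by
      refine convex_doublyStochastic (one_mem _) permMatrix_mem_doublyStochastic
        (by linarith) htc0 (by ring)
    have hTact : T *ᵥ y = y' := by
      funext m
      have : (T *ᵥ y) m = (1 - tc) * y m + tc * y (Equiv.swap i j m) := by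
        rw [hTdef, add_mulVec, smul_mulVec, smul_mulVec, one_mulVec]
        simp [permMatrix_mulVec]
      rw [this]
      rcases eq_or_ne m i with rfl | hmi
      · rw [Equiv.swap_apply_left, hy'i]
        have he : (1 - tc) * y i + tc * y j = y i - tc * (y i - y j) := by ring
        rw [he, htcδ]
      rcases eq_or_ne m j with rfl | hmj
      · rw [Equiv.swap_apply_right, hy'j]
        have he : (1 - tc) * y j + tc * y i = y j + tc * (y i - y j) := by ring
        rw [he, htcδ]
      · rw [Equiv.swap_apply_of_ne_of_ne hmi hmj, hy'o m hmi hmj]; ring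
    -- the count decreases
    have hmemij : i ∈ Finset.univ.filter (fun t => x t ≠ y t) := by
      simp [ne_of_lt hi.2]
    have hmemj : j ∈ Finset.univ.filter (fun t => x t ≠ y t) := by
      simp [ne_of_gt hj]
    have hcard' : (Finset.univ.filter (fun t => x t ≠ y' t)).card ≤ d := by
      rcases min_cases (y i - x i) (x j - y j) with ⟨hmin, _⟩ | ⟨hmin, _⟩
      · -- δ = y i - x i ; pivot i
        have hminδ : δ = y i - x i := by rw [hδdef, hmin]
        have hpivot : x i = y' i := by rw [hy'i, hminδ]; ring
        have hsub : Finset.univ.filter (fun t => x t ≠ y' t)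
            ⊆ (Finset.univ.filter (fun t => x t ≠ y t)).erase i := by
          intro t ht
          simp only [Finset.mem_filter, Finset.mem_univ, true_and] at ht
          rw [Finset.mem_erase]
          have hti : t ≠ i := fun h => ht (h ▸ hpivot)
          refine ⟨hti, ?_⟩
          simp only [Finset.mem_filter, Finset.mem_univ, true_and]
          rcases eq_or_ne t j with rfl | htj
          · exact ne_of_gt hj
          · rw [← hy'o t hti htj]; exact ht
        calc (Finset.univ.filter (fun t => x t ≠ y' t)).card
            ≤ ((Finset.univ.filter (fun t => x t ≠ y t)).erase i).card :=
              Finset.card_le_card hsub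
          _ = (Finset.univ.filter (fun t => x t ≠ y t)).card - 1 :=
              Finset.card_erase_of_mem hmemij
          _ ≤ d := by omega
      · -- δ = x j - y j ; pivot j
        have hminδ : δ = x j - y j := by rw [hδdef, hmin]
        have hpivot : x j = y' j := by rw [hy'j, hminδ]; ring
        have hsub : Finset.univ.filter (fun t => x t ≠ y' t)
            ⊆ (Finset.univ.filter (fun t => x t ≠ y t)).erase j := by
          intro t ht
          simp only [Finset.mem_filter, Finset.mem_univ, true_and] at ht
          rw [Finset.mem_erase]
          have htj : t ≠ j := fun h => ht (h ▸ hpivot)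
          refine ⟨htj, ?_⟩
          simp only [Finset.mem_filter, Finset.mem_univ, true_and]
          rcases eq_or_ne t i with rfl | hti
          · exact ne_of_lt hi.2
          · rw [← hy'o t hti htj]; exact ht
        calc (Finset.univ.filter (fun t => x t ≠ y' t)).card
            ≤ ((Finset.univ.filter (fun t => x t ≠ y t)).erase j).card :=
              Finset.card_le_card hsub
          _ = (Finset.univ.filter (fun t => x t ≠ y t)).card - 1 :=
              Finset.card_erase_of_mem hmemj
          _ ≤ d := by omega
    -- majorization for y'
    have hkey : ∀ k : ℕ, (i : ℕ) < k → k ≤ (j : ℕ) → S x k + δ ≤ S y k := by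
      intro k
      induction k with
      | zero => omega
      | succ k ihk =>
        intro hik hkj
        rcases Nat.lt_or_ge (i : ℕ) k with hik' | hik'
        · -- use ihk
          have hkn : k < n := by have := j.2; omega
          have hxyk : x ⟨k, hkn⟩ = y ⟨k, hkn⟩ := by
            refine hbetween _ ?_ ?_
            · rw [Fin.lt_def]; exact hik'
            · rw [Fin.lt_def]; exact Nat.lt_of_succ_le hkj
          rw [S_succ x hkn, S_succ y hkn, hxyk]
          have := ihk hik' (le_of_lt (Nat.lt_of_succ_le hkj))
          linarith
        · -- k = i : base case
          have hk : k = (i : ℕ) := by omega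
          subst hk
          have hkn : (i : ℕ) < n := i.2
          rw [S_succ x hkn, S_succ y hkn]
          have h1 := hmaj (i : ℕ)
          have h2 : x ⟨(i : ℕ), hkn⟩ + δ ≤ y ⟨(i : ℕ), hkn⟩ := by
            simp only [Fin.eta]
            linarith
          linarith
    have hmaj' : ∀ k : ℕ, S x k ≤ S y' k := by
      intro k
      have hdiff : S y' k - S y k
          = ∑ t ∈ Finset.univ.filter (fun t : Fin n => (t : ℕ) < k), (y' t - y t) := by
        rw [S, S, ← Finset.sum_sub_distrib]
      rcases Nat.lt_or_ge (i : ℕ) k with hik | hik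
      · rcases Nat.lt_or_ge (j : ℕ) k with hjk | hjk
        · -- both i and j in window; sums equal
          have hsub : ({i, j} : Finset (Fin n))
              ⊆ Finset.univ.filter (fun t : Fin n => (t : ℕ) < k) := by
            intro t ht
            simp only [Finset.mem_insert, Finset.mem_singleton] at ht
            rcases ht with rfl | rfl <;> simp [hik, hjk]
          have hzero : S y' k = S y k := by
            have h0 : ∑ t ∈ Finset.univ.filter (fun t : Fin n => (t : ℕ) < k), (y' t - y t)
                = ∑ t ∈ ({i, j} : Finset (Fin n)), (y' t - y t) := by
              refine (Finset.sum_subset hsub ?_).symm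
              intro t _ htn
              simp only [Finset.mem_insert, Finset.mem_singleton, not_or] at htn
              rw [hy'o t htn.1 htn.2, sub_self]
            rw [h0, Finset.sum_insert (by simp [hij]), Finset.sum_singleton,
              hy'i, hy'j] at hdiff
            have : S y' k - S y k = 0 := by rw [hdiff]; ring
            linarith
          rw [hzero]; exact hmaj k
        · -- i in window, j not: S y' k = S y k - δ
          have hik' : i ∈ Finset.univ.filter (fun t : Fin n => (t : ℕ) < k) := by
            simp [hik]
          have h0 : ∑ t ∈ Finset.univ.filter (fun t : Fin n => (t : ℕ) < k), (y' t - y t)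
              = y' i - y i := by
            refine Finset.sum_eq_single_of_mem i hik' ?_
            intro t ht htne
            simp only [Finset.mem_filter, Finset.mem_univ, true_and] at ht
            have htj : t ≠ j := by
              intro h; subst h; omega
            rw [hy'o t htne htj, sub_self]
          rw [h0, hy'i] at hdiff
          have : S y' k = S y k - δ := by linarith
          rw [this]
          have := hkey k hik hjk
          linarith
      · -- neither i nor j in window
        have hzero : S y' k = S y k := by
          have h0 : ∑ t ∈ Finset.univ.filter (fun t : Fin n => (t : ℕ) < k), (y' t - y t)
              = 0 := by
            refine Finset.sum_eq_zero fun t ht => ?_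
            simp only [Finset.mem_filter, Finset.mem_univ, true_and] at ht
            have hti : t ≠ i := by intro h; subst h; omega
            have htj : t ≠ j := by
              intro h; subst h
              have := hi.1
              rw [Fin.lt_def] at this
              omega
            rw [hy'o t hti htj, sub_self]
          rw [h0] at hdiff
          linarith
        rw [hzero]; exact hmaj k
    have htot' : ∑ t, x t = ∑ t, y' t := by
      have h0 : ∑ t, (y' t - y t) = ∑ t ∈ ({i, j} : Finset (Fin n)), (y' t - y t) := by
        refine (Finset.sum_subset (Finset.subset_univ _) ?_).symm
        intro t _ htn
        simp only [Finset.mem_insert, Finset.mem_singleton, not_or] at htn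
        rw [hy'o t htn.1 htn.2, sub_self]
      rw [Finset.sum_insert (by simp [hij]), Finset.sum_singleton, hy'i, hy'j] at h0
      have h1 : ∑ t, y' t = ∑ t, y t := by
        have := Finset.sum_sub_distrib (f := y') (g := y) (s := Finset.univ)
        rw [h0] at this
        have h2 : (y i - δ - y i) + (y j + δ - y j) = 0 := by ring
        linarith [this, h2]
      rw [h1]; exact htot
    obtain ⟨M', hM'mem, hM'act⟩ := ih y' hcard' hmaj' htot'
    refine ⟨M' * T, mul_mem hM'mem hT, ?_⟩
    rw [← Matrix.mulVec_mulVec, hTact, hM'act]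

/-- spectral theorem with a permutation of the eigenvalues -/
lemma specPerm {A : Matrix (Fin n) (Fin n) ℂ} (hA : A.IsHermitian) (σ : Equiv.Perm (Fin n)) :
    ∃ V : Matrix (Fin n) (Fin n) ℂ, Vᴴ * V = 1 ∧ V * Vᴴ = 1 ∧
      A = V * diagonal (fun i => (hA.eigenvalues (σ i) : ℂ)) * Vᴴ := by
  set U : Matrix (Fin n) (Fin n) ℂ := (hA.eigenvectorUnitary : Matrix (Fin n) (Fin n) ℂ) with hU
  have hU1 : Uᴴ * U = 1 := by
    rw [← Matrix.star_eq_conjTranspose]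
    exact (Unitary.mem_iff.mp (hA.eigenvectorUnitary).2).1
  have hU2 : U * Uᴴ = 1 := by
    rw [← Matrix.star_eq_conjTranspose]
    exact (Unitary.mem_iff.mp (hA.eigenvectorUnitary).2).2
  refine ⟨U.submatrix id σ, ?_, ?_, ?_⟩
  · rw [conjTranspose_submatrix]
    have : Uᴴ.submatrix (σ : Fin n → Fin n) (id : Fin n → Fin n) * U.submatrix id (σ : Fin n → Fin n)
        = Uᴴ.submatrix (σ : Fin n → Fin n) (Equiv.refl (Fin n))
          * U.submatrix (Equiv.refl (Fin n)) (σ : Fin n → Fin n) := rfl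
    rw [this, Matrix.submatrix_mul_equiv, hU1, Matrix.submatrix_one_equiv]
  · have : U.submatrix (id : Fin n → Fin n) (σ : Fin n → Fin n) * Uᴴ.submatrix (σ : Fin n → Fin n) id
        = U.submatrix (id : Fin n → Fin n) σ * Uᴴ.submatrix (σ : Equiv.Perm (Fin n)) (id : Fin n → Fin n) := rfl
    rw [conjTranspose_submatrix, this, Matrix.submatrix_mul_equiv, hU2]
    simp
  · have hd : diagonal (fun i => (hA.eigenvalues (σ i) : ℂ))
        = (diagonal (RCLike.ofReal ∘ hA.eigenvalues)).submatrix σ σ := by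
      rw [Matrix.submatrix_diagonal _ _ σ.injective]
      rfl
    rw [conjTranspose_submatrix, hd]
    have h1 : U.submatrix (id : Fin n → Fin n) σ *
        (diagonal (RCLike.ofReal ∘ hA.eigenvalues)).submatrix (σ : Fin n → Fin n) (σ : Fin n → Fin n)
        = (U * diagonal (RCLike.ofReal ∘ hA.eigenvalues)).submatrix (id : Fin n → Fin n) σ :=
      Matrix.submatrix_mul_equiv _ _ _ σ _
    rw [h1]
    have h2 : (U * diagonal (RCLike.ofReal ∘ hA.eigenvalues)).submatrix (id : Fin n → Fin n) σ *
        Uᴴ.submatrix (σ : Fin n → Fin n) (id : Fin n → Fin n)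
        = (U * diagonal (RCLike.ofReal ∘ hA.eigenvalues) * Uᴴ).submatrix (id : Fin n → Fin n) id :=
      Matrix.submatrix_mul_equiv _ _ _ σ _
    rw [h2, Matrix.submatrix_id_id]
    conv_lhs => rw [hA.spectral_theorem]
    rw [Unitary.conjStarAlgAut_apply]; rfl
private lemma conj_mul_conj (V X Y : Matrix (Fin n) (Fin n) ℂ) (hV : Vᴴ * V = 1) :
    (V * X * Vᴴ) * (V * Y * Vᴴ) = V * (X * Y) * Vᴴ := by
  simp only [Matrix.mul_assoc]
  rw [← Matrix.mul_assoc Vᴴ V (Y * Vᴴ), hV, Matrix.one_mul]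

private lemma conj_cancel (V X : Matrix (Fin n) (Fin n) ℂ) (hV : Vᴴ * V = 1) :
    Vᴴ * (V * X * Vᴴ) * V = X := by
  simp only [Matrix.mul_assoc]
  rw [← Matrix.mul_assoc Vᴴ V (X * (Vᴴ * V)), hV, Matrix.one_mul, Matrix.mul_one]

private lemma trace_conj (V X : Matrix (Fin n) (Fin n) ℂ) (hV : Vᴴ * V = 1) :
    (V * X * Vᴴ).trace = X.trace := by
  rw [Matrix.trace_mul_cycle, hV, Matrix.one_mul]

private lemma psd_sum {m : ℕ} (f : Fin m → Matrix (Fin n) (Fin n) ℂ)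
    (h : ∀ i, (f i).PosSemidef) : (∑ i, f i).PosSemidef :=
  Finset.sum_induction f _ (fun _ _ ha hb => ha.add hb) Matrix.PosSemidef.zero fun i _ => h i

private lemma psd_diag {M : Matrix (Fin n) (Fin n) ℂ} (hM : M.PosSemidef) (j : Fin n) :
    0 ≤ M j j := by
  exact hM.diag_nonneg



private lemma card_filter_lt' {k : ℕ} (hk : k ≤ n) :
    (Finset.univ.filter (fun i : Fin n => (i : ℕ) < k)).card = k := by
  induction k with
  | zero => simp
  | succ k ih =>
    have hlt : k < n := hk
    have : Finset.univ.filter (fun i : Fin n => (i : ℕ) < k + 1)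
        = insert ⟨k, hlt⟩ (Finset.univ.filter (fun i : Fin n => (i : ℕ) < k)) := by
      ext i
      simp only [mem_filter, mem_univ, true_and, mem_insert, Fin.ext_iff]
      omega
    rw [this, Finset.card_insert_of_notMem (by simp), ih (le_of_lt hlt)]

private lemma S_of_le (f : Fin n → ℝ) {k : ℕ} (hk : n ≤ k) : S f k = ∑ i, f i := by
  rw [S, Finset.filter_true_of_mem fun i _ => lt_of_lt_of_le i.2 hk]

private lemma abacus (y q : Fin n → ℝ) (hy : Antitone y) (h0 : ∀ j, 0 ≤ q j)
    (h1 : ∀ j, q j ≤ 1) {k : ℕ} (hk : k ≤ n) (hsum : ∑ j, q j = k) :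
    ∑ j, q j * y j ≤ S y k := by

  set F := Finset.univ.filter (fun i : Fin n => (i : ℕ) < k) with hF
  rcases eq_or_lt_of_le hk with rfl | hkn
  · -- k = n : all q j = 1
    have hall : ∀ j, q j = 1 := by
      have hzero : ∑ j, (1 - q j) = 0 := by
        rw [Finset.sum_sub_distrib, hsum]; simp [Finset.card_univ]
      intro j
      have := (Finset.sum_eq_zero_iff_of_nonneg (fun i _ => by linarith [h1 i])).mp hzero j
        (Finset.mem_univ j)
      linarith
    rw [S_of_le y le_rfl]
    refine le_of_eq (Finset.sum_congr rfl fun j _ => by rw [hall j, one_mul])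
  · -- k < n
    set c := y ⟨k, hkn⟩ with hc
    have key : S y k - ∑ j, q j * y j ≥ 0 := by
      have hsplit : ∑ j, q j * y j
          = ∑ j ∈ F, q j * y j + ∑ j ∈ Fᶜ, q j * y j :=
        (Finset.sum_add_sum_compl F _).symm
      have hqF : ∑ j ∈ F, q j + ∑ j ∈ Fᶜ, q j = k := by
        rw [Finset.sum_add_sum_compl, hsum]
      have hcard : (F.card : ℝ) = k := by rw [hF, card_filter_lt' hk]
      have h₁ : ∑ j ∈ F, (1 - q j) * y j ≥ ∑ j ∈ F, (1 - q j) * c := by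
        refine Finset.sum_le_sum fun j hj => ?_
        have hji : j ≤ (⟨k, hkn⟩ : Fin n) := by
          rw [hF] at hj; simp only [mem_filter] at hj
          exact le_of_lt (by exact_mod_cast hj.2)
        exact mul_le_mul_of_nonneg_left (hy hji) (by linarith [h1 j])
      have h₂ : ∑ j ∈ Fᶜ, q j * y j ≤ ∑ j ∈ Fᶜ, q j * c := by
        refine Finset.sum_le_sum fun j hj => ?_
        have hji : (⟨k, hkn⟩ : Fin n) ≤ j := by
          rw [hF] at hj; simp only [Finset.mem_compl, mem_filter, mem_univ, true_and,
            not_lt] at hj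
          exact hj
        exact mul_le_mul_of_nonneg_left (hy hji) (h0 j)
      have hSF : S y k - ∑ j, q j * y j
          = ∑ j ∈ F, (1 - q j) * y j - ∑ j ∈ Fᶜ, q j * y j := by
        rw [hsplit, S]
        simp only [sub_mul, one_mul, Finset.sum_sub_distrib]
        ring
      have hbal : ∑ j ∈ F, (1 - q j) * c - ∑ j ∈ Fᶜ, q j * c = 0 := by
        rw [← Finset.sum_mul, ← Finset.sum_mul, ← sub_mul]
        have : ∑ j ∈ F, (1 - q j) = F.card - ∑ j ∈ F, q j := by
          rw [Finset.sum_sub_distrib]; simp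
        rw [this, hcard]
        have h0' : (k : ℝ) - ∑ j ∈ F, q j - ∑ i ∈ Fᶜ, q i = 0 := by linarith [hqF]
        rw [h0', zero_mul]
      linarith
    linarith

private lemma kraus_partial {ρ₁ ρ₂ : Matrix (Fin n) (Fin n) ℂ}
    (h1 : ρ₁.PosSemidef) (h2 : ρ₂.PosSemidef)
    {m : ℕ} {A : Fin m → Matrix (Fin n) (Fin n) ℂ}
    (hA1 : ∑ i, (A i)ᴴ * A i = 1) (hA2 : ∑ i, A i * (A i)ᴴ = 1)
    (hρ : ρ₁ = ∑ i, A i * ρ₂ * (A i)ᴴ)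
    (σ τ : Equiv.Perm (Fin n))
    (hτ : Antitone (fun i => h2.isHermitian.eigenvalues (τ i)))
    {k : ℕ} (hk : k ≤ n) :
    S (fun i => h1.isHermitian.eigenvalues (σ i)) k
      ≤ S (fun i => h2.isHermitian.eigenvalues (τ i)) k := by
  set x : Fin n → ℝ := fun i => h1.isHermitian.eigenvalues (σ i) with hxdef
  set y : Fin n → ℝ := fun i => h2.isHermitian.eigenvalues (τ i) with hydef
  obtain ⟨V₁, hV₁1, hV₁2, hρ₁⟩ := specPerm h1.isHermitian σ
  obtain ⟨V₂, hV₂1, hV₂2, hρ₂⟩ := specPerm h2.isHermitian τ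
  set D : Matrix (Fin n) (Fin n) ℂ :=
    diagonal (fun i : Fin n => if (i : ℕ) < k then (1 : ℂ) else 0) with hDdef
  set P : Matrix (Fin n) (Fin n) ℂ := V₁ * D * V₁ᴴ with hPdef
  set Q : Matrix (Fin n) (Fin n) ℂ := ∑ i, (A i)ᴴ * P * A i with hQdef
  set B : Matrix (Fin n) (Fin n) ℂ := V₂ᴴ * Q * V₂ with hBdef
  -- step 1 : trace (P * ρ₁) = S x k
  have htr1 : (P * ρ₁).trace = ((S x k : ℝ) : ℂ) := by
    have hPρ : P * ρ₁ = V₁ * (D * diagonal (fun i => (x i : ℂ))) * V₁ᴴ := by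
      rw [hρ₁, hPdef]
      exact conj_mul_conj V₁ D (diagonal fun i => (x i : ℂ)) hV₁1
    rw [hPρ, trace_conj _ _ hV₁1, diagonal_mul_diagonal, trace_diagonal]
    rw [S, Complex.ofReal_sum, Finset.sum_filter]
    refine Finset.sum_congr rfl fun i _ => ?_
    split <;> simp
  -- step 2 : trace (P * ρ₁) = trace (B * diagonal y)
  have htr2 : (P * ρ₁).trace = (B * diagonal (fun i => (y i : ℂ))).trace := by
    have e1 : (P * ρ₁).trace = (Q * ρ₂).trace := by
      rw [hρ, Finset.mul_sum, trace_sum, hQdef, Finset.sum_mul, trace_sum]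
      refine Finset.sum_congr rfl fun i _ => ?_
      rw [← Matrix.mul_assoc, ← Matrix.mul_assoc, Matrix.trace_mul_cycle (P * A i) ρ₂ ((A i)ᴴ),
        ← Matrix.mul_assoc, Matrix.mul_assoc ((A i)ᴴ * P) (A i) ρ₂, ← Matrix.mul_assoc]
    have e2 : (Q * ρ₂).trace = (B * diagonal (fun i => (y i : ℂ))).trace := by
      rw [hρ₂, hBdef]
      rw [← Matrix.mul_assoc, ← Matrix.mul_assoc, Matrix.trace_mul_cycle (Q * V₂)
        (diagonal fun i => (y i : ℂ)) (V₂ᴴ), ← Matrix.mul_assoc]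
    rw [e1, e2]
  -- step 3 : positivity facts
  have hDpsd : D.PosSemidef := by
    rw [hDdef]
    refine posSemidef_diagonal_iff.mpr fun i => ?_
    split
    · exact zero_le_one
    · exact le_refl 0
  have hPpsd : P.PosSemidef := hDpsd.mul_mul_conjTranspose_same V₁
  have hQpsd : Q.PosSemidef := psd_sum _ fun i => hPpsd.conjTranspose_mul_mul_same (A i)
  have hBpsd : B.PosSemidef := hQpsd.conjTranspose_mul_mul_same V₂
  have hD1psd : ((1 : Matrix (Fin n) (Fin n) ℂ) - D).PosSemidef := by
    rw [hDdef, ← diagonal_one, diagonal_sub]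
    refine posSemidef_diagonal_iff.mpr fun i => ?_
    by_cases h : (i : ℕ) < k <;> simp [h]
  have hP1 : (1 : Matrix (Fin n) (Fin n) ℂ) - P = V₁ * (1 - D) * V₁ᴴ := by
    rw [Matrix.mul_sub, Matrix.sub_mul, Matrix.mul_one, hV₁2, hPdef]
  have hP1psd : ((1 : Matrix (Fin n) (Fin n) ℂ) - P).PosSemidef := by
    rw [hP1]; exact hD1psd.mul_mul_conjTranspose_same V₁
  have hQ1 : (1 : Matrix (Fin n) (Fin n) ℂ) - Q = ∑ i, (A i)ᴴ * (1 - P) * A i := by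
    have : ∀ i : Fin m, (A i)ᴴ * (1 - P) * A i = (A i)ᴴ * A i - (A i)ᴴ * P * A i := by
      intro i
      rw [Matrix.mul_sub, Matrix.mul_one, Matrix.sub_mul]
    rw [Finset.sum_congr rfl fun i _ => this i, Finset.sum_sub_distrib, hA1, hQdef]
  have hQ1psd : ((1 : Matrix (Fin n) (Fin n) ℂ) - Q).PosSemidef := by
    rw [hQ1]; exact psd_sum _ fun i => hP1psd.conjTranspose_mul_mul_same (A i)
  have hB1 : (1 : Matrix (Fin n) (Fin n) ℂ) - B = V₂ᴴ * (1 - Q) * V₂ := by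
    rw [Matrix.mul_sub, Matrix.sub_mul, Matrix.mul_one, hV₂1, hBdef]
  have hB1psd : ((1 : Matrix (Fin n) (Fin n) ℂ) - B).PosSemidef := by
    rw [hB1]; exact hQ1psd.conjTranspose_mul_mul_same V₂
  -- step 4 : diagonal entries of B
  set q : Fin n → ℝ := fun j => (B j j).re with hqdef
  have hq0 : ∀ j, 0 ≤ q j := fun j => (Complex.nonneg_iff.mp (psd_diag hBpsd j)).1
  have hBjj : ∀ j, B j j = ((q j : ℝ) : ℂ) := by
    intro j
    have him := (Complex.nonneg_iff.mp (psd_diag hBpsd j)).2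
    exact Complex.ext rfl him.symm
  have hq1 : ∀ j, q j ≤ 1 := by
    intro j
    have := (Complex.nonneg_iff.mp (psd_diag hB1psd j)).1
    simp only [Matrix.sub_apply, Matrix.one_apply_eq, Complex.sub_re, Complex.one_re] at this
    linarith
  -- step 5 : sum of q equals k
  have hsumq : ∑ j, q j = (k : ℝ) := by
    have htrB : B.trace = (k : ℂ) := by
      have e0 : B.trace = Q.trace := by
        rw [hBdef, Matrix.trace_mul_cycle, hV₂2, Matrix.one_mul]
      have e1 : Q.trace = P.trace := by
        rw [hQdef, trace_sum]
        have : ∀ i : Fin m, ((A i)ᴴ * P * A i).trace = (A i * (A i)ᴴ * P).trace := by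
          intro i
          rw [Matrix.trace_mul_cycle ((A i)ᴴ) P (A i)]
        rw [Finset.sum_congr rfl fun i _ => this i, ← trace_sum, ← Finset.sum_mul, hA2,
          Matrix.one_mul]
      have e2 : P.trace = D.trace := trace_conj _ _ hV₁1
      have e3 : D.trace = (k : ℂ) := by
        rw [hDdef, trace_diagonal, Finset.sum_boole]
        norm_cast
        exact card_filter_lt' hk
      rw [e0, e1, e2, e3]
    have htrB' : B.trace = ((∑ j, q j : ℝ) : ℂ) := by
      simp only [Matrix.trace, Matrix.diag_apply, Matrix.diag]
      rw [Finset.sum_congr rfl fun j _ => hBjj j, ← Complex.ofReal_sum]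
    rw [htrB'] at htrB
    exact_mod_cast htrB
  -- step 6 : conclude
  have htrBD : (B * diagonal (fun i => (y i : ℂ))).trace = ((∑ j, q j * y j : ℝ) : ℂ) := by
    have hdiag : ∀ j : Fin n, (B * diagonal (fun i => (y i : ℂ))) j j = ((q j * y j : ℝ) : ℂ) := by
      intro j
      rw [Matrix.mul_diagonal, hBjj]
      push_cast
      ring
    simp only [Matrix.trace, Matrix.diag_apply, Matrix.diag]
    rw [Finset.sum_congr rfl fun j _ => hdiag j, ← Complex.ofReal_sum]
  have hfinal : S x k = ∑ j, q j * y j := by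
    have := htr1.symm.trans (htr2.trans htrBD)
    exact_mod_cast this
  rw [hfinal]
  exact abacus y q hτ hq0 hq1 hk hsumq



private lemma exists_antitone_perm (f : Fin n → ℝ) :
    ∃ σ : Equiv.Perm (Fin n), Antitone fun i => f (σ i) := by
  refine ⟨Equiv.trans Fin.revPerm (Tuple.sort f), fun a b hab => ?_⟩
  simp only [Equiv.trans_apply, Fin.revPerm_apply]
  exact Tuple.monotone_sort f (Fin.rev_le_rev.mpr hab)

private lemma kraus_exists {ρ₁ ρ₂ : Matrix (Fin n) (Fin n) ℂ}
    (h1 : ρ₁.PosSemidef) (h2 : ρ₂.PosSemidef) (σ₀ τ₀ : Equiv.Perm (Fin n))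
    (hxa : Antitone fun i => h1.isHermitian.eigenvalues (σ₀ i))
    (hmaj : ∀ k : ℕ, S (fun i => h1.isHermitian.eigenvalues (σ₀ i)) k
        ≤ S (fun i => h2.isHermitian.eigenvalues (τ₀ i)) k)
    (htot : ∑ i, h1.isHermitian.eigenvalues (σ₀ i) = ∑ i, h2.isHermitian.eigenvalues (τ₀ i)) :
    ∃ (m : ℕ) (A : Fin m → Matrix (Fin n) (Fin n) ℂ),
      (∑ i, (A i)ᴴ * A i = 1) ∧ (∑ i, A i * (A i)ᴴ = 1) ∧ ρ₁ = ∑ i, A i * ρ₂ * (A i)ᴴ := by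
  set x : Fin n → ℝ := fun i => h1.isHermitian.eigenvalues (σ₀ i) with hxdef
  set y : Fin n → ℝ := fun i => h2.isHermitian.eigenvalues (τ₀ i) with hydef
  obtain ⟨M, hM, hMx⟩ := hlp x hxa _ y le_rfl hmaj htot
  obtain ⟨w, hw0, hwsum, hwM⟩ := exists_eq_sum_perm_of_mem_doublyStochastic hM
  have hxeq : ∀ i, x i = ∑ π : Equiv.Perm (Fin n), w π * y (π i) := by
    intro i
    conv_lhs => rw [← hMx, ← hwM]
    simp only [mulVec, dotProduct, Matrix.sum_apply, Matrix.smul_apply, smul_eq_mul,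
      Finset.sum_mul]
    rw [Finset.sum_comm]
    refine Finset.sum_congr rfl fun π _ => ?_
    simp only [mul_assoc]
    rw [← Finset.mul_sum]
    congr 1
    simpa [mulVec, dotProduct] using permMatrix_mulVec π y i
  have hspec := fun π : Equiv.Perm (Fin n) => specPerm h2.isHermitian (π.trans τ₀)
  choose W hW1 hW2 hWρ using hspec
  obtain ⟨V₁, hV₁1, hV₁2, hρ₁⟩ := specPerm h1.isHermitian σ₀
  set K : Equiv.Perm (Fin n) → Matrix (Fin n) (Fin n) ℂ :=
    fun π => ((Real.sqrt (w π) : ℝ) : ℂ) • (V₁ * (W π)ᴴ) with hKdef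
  have hc : ∀ π, ((Real.sqrt (w π) : ℝ) : ℂ) * ((Real.sqrt (w π) : ℝ) : ℂ) = ((w π : ℝ) : ℂ) := by
    intro π
    rw [← Complex.ofReal_mul, Real.mul_self_sqrt (hw0 π)]
  have hKconj : ∀ π, (K π)ᴴ = ((Real.sqrt (w π) : ℝ) : ℂ) • (W π * V₁ᴴ) := by
    intro π
    rw [hKdef]
    simp only [conjTranspose_smul, conjTranspose_mul, conjTranspose_conjTranspose,
      Complex.star_def, Complex.conj_ofReal]
  have hKK1 : ∀ π, (K π)ᴴ * K π = ((w π : ℝ) : ℂ) • 1 := by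
    intro π
    rw [hKconj, hKdef]
    rw [smul_mul_smul_comm, hc]
    congr 1
    rw [Matrix.mul_assoc (W π) V₁ᴴ _, ← Matrix.mul_assoc V₁ᴴ V₁ _, hV₁1, Matrix.one_mul,
      hW2 π]
  have hKK2 : ∀ π, K π * (K π)ᴴ = ((w π : ℝ) : ℂ) • 1 := by
    intro π
    rw [hKconj, hKdef]
    rw [smul_mul_smul_comm, hc]
    congr 1
    rw [Matrix.mul_assoc V₁ (W π)ᴴ _, ← Matrix.mul_assoc (W π)ᴴ (W π) _, hW1 π, Matrix.one_mul,
      hV₁2]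
  have hKρ : ∀ π, K π * ρ₂ * (K π)ᴴ
      = ((w π : ℝ) : ℂ) • (V₁ * diagonal (fun i => (y (π i) : ℂ)) * V₁ᴴ) := by
    intro π
    rw [hKdef, hKconj]
    rw [smul_mul_assoc, smul_mul_assoc, mul_smul_comm, smul_smul, hc]
    congr 1
    have hmid : (W π)ᴴ * ρ₂ * W π = diagonal (fun i => (y (π i) : ℂ)) := by
      conv_lhs => rw [hWρ π]
      rw [conj_cancel _ _ (hW1 π)]
      rfl
    have hassoc : V₁ * (W π)ᴴ * ρ₂ * (W π * V₁ᴴ) = V₁ * ((W π)ᴴ * ρ₂ * W π) * V₁ᴴ := by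
      simp only [Matrix.mul_assoc]
    rw [hassoc, hmid]
  set m := Fintype.card (Equiv.Perm (Fin n)) with hmdef
  set e := (Fintype.equivFin (Equiv.Perm (Fin n))).symm with hedef
  refine ⟨m, fun i => K (e i), ?_, ?_, ?_⟩
  · rw [Equiv.sum_comp e (fun π => (K π)ᴴ * K π)]
    rw [Finset.sum_congr rfl fun π _ => hKK1 π, ← Finset.sum_smul, ← Complex.ofReal_sum,
      hwsum, Complex.ofReal_one, one_smul]
  · rw [Equiv.sum_comp e (fun π => K π * (K π)ᴴ)]
    rw [Finset.sum_congr rfl fun π _ => hKK2 π, ← Finset.sum_smul, ← Complex.ofReal_sum,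
      hwsum, Complex.ofReal_one, one_smul]
  · rw [Equiv.sum_comp e (fun π => K π * ρ₂ * (K π)ᴴ)]
    rw [Finset.sum_congr rfl fun π _ => hKρ π]
    have hpull : ∀ π : Equiv.Perm (Fin n),
        ((w π : ℝ) : ℂ) • (V₁ * diagonal (fun i => (y (π i) : ℂ)) * V₁ᴴ)
          = V₁ * (((w π : ℝ) : ℂ) • diagonal (fun i => (y (π i) : ℂ))) * V₁ᴴ := by
      intro π
      rw [mul_smul_comm, smul_mul_assoc]
    rw [Finset.sum_congr rfl fun π _ => hpull π, ← Finset.sum_mul, ← Finset.mul_sum]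
    have hdiagsum : ∑ π : Equiv.Perm (Fin n),
        ((w π : ℝ) : ℂ) • diagonal (fun i => (y (π i) : ℂ))
          = diagonal (fun i => (x i : ℂ)) := by
      ext a b
      rcases eq_or_ne a b with rfl | hab
      · simp only [Matrix.sum_apply, Matrix.smul_apply, diagonal_apply_eq, smul_eq_mul]
        rw [hxeq a]
        push_cast
        rfl
      · simp [Matrix.sum_apply, diagonal_apply_ne _ hab]
    rw [hdiagsum, ← hρ₁]


/-- Uhlmann-type theorem, finite dimension: For density matrices
`ρ₁, ρ₂`, the eigenvalues of `ρ₁` are majorized by those of `ρ₂` (for any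
permutations arranging the eigenvalues in non-increasing order, every initial
partial sum for `ρ₁` is at most that for `ρ₂`, with equal totals) if and only
if `ρ₁ = ∑ᵢ Aᵢ ρ₂ Aᵢᴴ` for some bi-stochastic family of Kraus operators
(`∑ᵢ Aᵢᴴ Aᵢ = 1 = ∑ᵢ Aᵢ Aᵢᴴ`). -/
theorem eigenvalues_majorized_iff_bistochastic {n : ℕ}
    (ρ₁ ρ₂ : Matrix (Fin n) (Fin n) ℂ)
    (h1 : ρ₁.PosSemidef) (h2 : ρ₂.PosSemidef)
    (ht1 : ρ₁.trace = 1) (ht2 : ρ₂.trace = 1) :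
    (∀ σ τ : Equiv.Perm (Fin n),
      Antitone (fun i => h1.isHermitian.eigenvalues (σ i)) →
      Antitone (fun i => h2.isHermitian.eigenvalues (τ i)) →
      (∀ k : ℕ, k ≤ n →
        ∑ i ∈ Finset.univ.filter (fun i : Fin n => (i : ℕ) < k),
            h1.isHermitian.eigenvalues (σ i) ≤
          ∑ i ∈ Finset.univ.filter (fun i : Fin n => (i : ℕ) < k),
            h2.isHermitian.eigenvalues (τ i)) ∧
      ∑ i, h1.isHermitian.eigenvalues i = ∑ i, h2.isHermitian.eigenvalues i)
    ↔ ∃ (m : ℕ) (A : Fin m → Matrix (Fin n) (Fin n) ℂ),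
        (∑ i, (A i)ᴴ * A i = 1) ∧ (∑ i, A i * (A i)ᴴ = 1) ∧
        ρ₁ = ∑ i, A i * ρ₂ * (A i)ᴴ := by
  constructor
  · intro h
    obtain ⟨σ₀, hσ₀⟩ := exists_antitone_perm h1.isHermitian.eigenvalues
    obtain ⟨τ₀, hτ₀⟩ := exists_antitone_perm h2.isHermitian.eigenvalues
    obtain ⟨hmaj, htot⟩ := h σ₀ τ₀ hσ₀ hτ₀
    have htot' : ∑ i, h1.isHermitian.eigenvalues (σ₀ i)
        = ∑ i, h2.isHermitian.eigenvalues (τ₀ i) := by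
      rw [Equiv.sum_comp σ₀ h1.isHermitian.eigenvalues,
        Equiv.sum_comp τ₀ h2.isHermitian.eigenvalues]
      exact htot
    have hmaj' : ∀ k : ℕ, S (fun i => h1.isHermitian.eigenvalues (σ₀ i)) k
        ≤ S (fun i => h2.isHermitian.eigenvalues (τ₀ i)) k := by
      intro k
      rcases le_or_gt k n with hk | hk
      · exact hmaj k hk
      · rw [S_of_le _ (le_of_lt hk), S_of_le _ (le_of_lt hk)]
        exact le_of_eq htot'
    exact kraus_exists h1 h2 σ₀ τ₀ hσ₀ hmaj' htot'
  · rintro ⟨m, A, hA1, hA2, hρ⟩ σ τ hσ hτ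
    refine ⟨fun k hk => kraus_partial h1 h2 hA1 hA2 hρ σ τ hτ hk, ?_⟩
    have t1 : ∑ i, h1.isHermitian.eigenvalues i = 1 := by
      obtain ⟨V, hV1, _, hVρ⟩ := specPerm h1.isHermitian (Equiv.refl _)
      have he : ρ₁.trace = ((∑ i, h1.isHermitian.eigenvalues i : ℝ) : ℂ) := by
        conv_lhs => rw [hVρ]
        rw [trace_conj _ _ hV1, trace_diagonal, Complex.ofReal_sum]
        simp [Equiv.refl_apply]
      rw [ht1] at he
      exact_mod_cast he.symm
    have t2 : ∑ i, h2.isHermitian.eigenvalues i = 1 := by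
      obtain ⟨V, hV1, _, hVρ⟩ := specPerm h2.isHermitian (Equiv.refl _)
      have he : ρ₂.trace = ((∑ i, h2.isHermitian.eigenvalues i : ℝ) : ℂ) := by
        conv_lhs => rw [hVρ]
        rw [trace_conj _ _ hV1, trace_diagonal, Complex.ofReal_sum]
        simp [Equiv.refl_apply]
      rw [ht2] at he
      exact_mod_cast he.symm
    rw [t1, t2]
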